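/- Let n be a positive integer divisible by 2. Let D_1 and D_2 be sets of divisors of n, and let S_i = ⋃_{d∈D_i} G_n(d) for i = 1,2. If ICG(n,D_1) and ICG(n,D_2) are isospectral, then (a) ∑_{d | n, d odd, d ∈ D_1} φ(n/d) = ∑_{d | n, d odd, d ∈ D_2} φ(n/d), and (b) ∑_{d | n, d even, d ∈ D_1} φ(n/d) = ∑_{d | n, d even, d ∈ D_2} φ(n/d), where φ is Euler's totient function. -/

import Mathlib

open Finset

/-- `ω_n = exp(2πi/n)`. -/
noncomputable def omegaN (n : ℕ) : ℂ := Complex.exp (2 * Real.pi * Complex.I / n)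

/-- `λ_k(S) = ∑_{g ∈ S} ω_n^{k g}`, the eigenvalues of the circulant graph `Cay(ℤ_n, S)`. -/
noncomputable def lam (n : ℕ) (S : Finset ℕ) (k : ℕ) : ℂ :=
  ∑ g ∈ S, omegaN n ^ (k * g)

/-- The spectrum of `Cay(ℤ_n, S)`, i.e. the multiset `(λ_k(S))_{k ∈ [n]}`. -/
noncomputable def spec (n : ℕ) (S : Finset ℕ) : Multiset ℂ :=
  (Finset.Icc 1 n).val.map (lam n S)

/-- The connection set of `ICG(n, D)`:
`⋃_{d ∈ D} G_n(d) = {j ∈ [n] : gcd(j,n) ∈ D}` where `G_n(d) = {j ∈ [n] : gcd(j,n) = d}`. -/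
def connSet (n : ℕ) (D : Finset ℕ) : Finset ℕ :=
  (Finset.Icc 1 n).filter (fun j => Nat.gcd j n ∈ D)

lemma omega_prim {n : ℕ} (hn : 0 < n) : IsPrimitiveRoot (omegaN n) n := by
  have := Complex.isPrimitiveRoot_exp n hn.ne'
  simpa [omegaN] using this

/-- `f x = ω ^ x.val` -/
noncomputable def fz (n : ℕ) (x : ZMod n) : ℂ := omegaN n ^ x.val

lemma fz_natCast {n : ℕ} (hn : 0 < n) (m : ℕ) : fz n (m : ZMod n) = omegaN n ^ m := by
  haveI : NeZero n := ⟨hn.ne'⟩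
  have h1 : (omegaN n) ^ n = 1 := (omega_prim hn).pow_eq_one
  rw [fz, ZMod.val_natCast]
  conv_rhs => rw [← Nat.div_add_mod m n]
  rw [pow_add, pow_mul, h1, one_pow, one_mul]

lemma fz_zero {n : ℕ} : fz n 0 = 1 := by simp [fz, ZMod.val_zero]

lemma fz_add {n : ℕ} (hn : 0 < n) : ∀ a b : ZMod n, fz n (a + b) = fz n a * fz n b := by
  haveI : NeZero n := ⟨hn.ne'⟩
  intro a b
  have h1 : fz n (((a.val + b.val : ℕ)) : ZMod n) = omegaN n ^ (a.val + b.val) :=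
    fz_natCast hn _
  rw [Nat.cast_add, ZMod.natCast_val, ZMod.natCast_val] at h1
  simpa [pow_add, fz] using h1

lemma fz_inj {n : ℕ} (hn : 0 < n) : Function.Injective (fz n) := by
  haveI : NeZero n := ⟨hn.ne'⟩
  intro a b hab
  exact ZMod.val_injective n ((omega_prim hn).pow_inj (ZMod.val_lt a) (ZMod.val_lt b) hab)

lemma fz_nat_mul {n : ℕ} (hn : 0 < n) (k : ℕ) (z : ZMod n) :
    fz n ((k : ZMod n) * z) = fz n z ^ k := by
  induction k with
  | zero => simp [fz_zero]
  | succ k ih =>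
      push_cast
      rw [add_mul, one_mul, fz_add hn, ih, pow_succ]

lemma fz_neg {n : ℕ} (hn : 0 < n) (x : ZMod n) : fz n (-x) = (fz n x)⁻¹ := by
  refine eq_inv_of_mul_eq_one_right ?_
  rw [← fz_add hn, add_neg_cancel, fz_zero]

lemma fz_conj {n : ℕ} (x : ZMod n) : (starRingEnd ℂ) (fz n x) = (fz n x)⁻¹ := by
  rw [fz, omegaN, map_pow, ← Complex.exp_conj]
  have h : (starRingEnd ℂ) (2 * Real.pi * Complex.I / n) = -(2 * Real.pi * Complex.I / n) := by
    simp [map_div₀, map_ofNat]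
    ring
  rw [h, Complex.exp_neg, inv_pow]

/-- the connection set viewed inside `ZMod n` -/
def TSet (n : ℕ) [NeZero n] (D : Finset ℕ) : Finset (ZMod n) :=
  Finset.univ.filter (fun x => Nat.gcd x.val n ∈ D)

lemma gcd_mod (g n : ℕ) : Nat.gcd (g % n) n = Nat.gcd g n := by
  conv_rhs => rw [Nat.gcd_comm, Nat.gcd_rec n g]

lemma lam_eq_sum_T {n : ℕ} (hn : 0 < n) (D : Finset ℕ) (k : ℕ) :
    haveI : NeZero n := ⟨hn.ne'⟩
    lam n (connSet n D) k = ∑ x ∈ TSet n D, fz n ((k : ZMod n) * x) := by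
  haveI : NeZero n := ⟨hn.ne'⟩
  rw [lam]
  refine Finset.sum_nbij' (i := fun g => (g : ZMod n))
    (j := fun x => if x = 0 then n else x.val) ?_ ?_ ?_ ?_ ?_
  · intro g hg
    simp only [connSet, Finset.mem_filter, Finset.mem_Icc] at hg
    simp only [TSet, Finset.mem_filter, Finset.mem_univ, true_and]
    rw [ZMod.val_natCast, gcd_mod]
    exact hg.2
  · intro x hx
    simp only [TSet, Finset.mem_filter, Finset.mem_univ, true_and] at hx
    simp only [connSet, Finset.mem_filter, Finset.mem_Icc]
    by_cases h0 : x = 0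
    · subst h0
      simp only [if_pos rfl]
      refine ⟨⟨hn, le_refl n⟩, ?_⟩
      simpa [Nat.gcd_self] using hx
    · rw [if_neg h0]
      have hv : x.val ≠ 0 := fun h => h0 (by rwa [← ZMod.val_eq_zero])
      exact ⟨⟨Nat.pos_of_ne_zero hv, (ZMod.val_lt x).le⟩, hx⟩
  · intro g hg
    simp only [connSet, Finset.mem_filter, Finset.mem_Icc] at hg
    by_cases h0 : (g : ZMod n) = 0
    · rw [if_pos h0]
      have : n ∣ g := by rwa [← ZMod.natCast_eq_zero_iff]
      exact (Nat.eq_of_dvd_of_lt_two_mul (by omega) this (by omega)).symm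
    · rw [if_neg h0, ZMod.val_natCast]
      have : g % n = g ∨ g = n := by
        rcases lt_or_eq_of_le hg.1.2 with h | h
        · exact Or.inl (Nat.mod_eq_of_lt h)
        · exact Or.inr h
      rcases this with h | h
      · exact h
      · exfalso; apply h0; rw [h, ZMod.natCast_self]
  · intro x hx
    by_cases h0 : x = 0
    · rw [if_pos h0, h0, ZMod.natCast_self]
    · rw [if_neg h0, ZMod.natCast_val, ZMod.cast_id]
  · intro g hg
    rw [← fz_natCast hn, Nat.cast_mul]

lemma TSet_card {n : ℕ} (hn : 0 < n) (D : Finset ℕ) :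
    haveI : NeZero n := ⟨hn.ne'⟩
    (TSet n D).card = (connSet n D).card := by
  haveI : NeZero n := ⟨hn.ne'⟩
  have h := lam_eq_sum_T hn D 0
  simp only [lam, Nat.cast_zero, zero_mul, mul_zero, pow_zero, fz_zero,
    Finset.sum_const, nsmul_eq_mul, mul_one, zero_mul] at h
  exact_mod_cast h.symm


lemma TSet_unit_sum {n : ℕ} (hn : 0 < n) (D : Finset ℕ) (u : (ZMod n)ˣ) (G : ZMod n → ℂ) :
    haveI : NeZero n := ⟨hn.ne'⟩
    ∑ x ∈ TSet n D, G ((u : ZMod n) * x) = ∑ y ∈ TSet n D, G y := by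
  haveI : NeZero n := ⟨hn.ne'⟩
  have key : ∀ (v : (ZMod n)ˣ) (x : ZMod n), x ∈ TSet n D → (v : ZMod n) * x ∈ TSet n D := by
    intro v x hx
    simp only [TSet, Finset.mem_filter, Finset.mem_univ, true_and] at hx ⊢
    rw [ZMod.val_mul, gcd_mod, Nat.Coprime.gcd_mul_left_cancel _ (ZMod.val_coe_unit_coprime v)]
    exact hx
  refine Finset.sum_nbij' (i := fun x => (u : ZMod n) * x) (j := fun y => ((u⁻¹ : (ZMod n)ˣ) : ZMod n) * y)
    (fun x hx => key u x hx) (fun y hy => key u⁻¹ y hy) ?_ ?_ (fun _ _ => rfl)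
  · intro x _; rw [← mul_assoc, ← Units.val_mul, inv_mul_cancel, Units.val_one, one_mul]
  · intro y _; rw [← mul_assoc, ← Units.val_mul, mul_inv_cancel, Units.val_one, one_mul]

lemma exists_unit_gcd {n : ℕ} (hn : 0 < n) (k : ℕ) :
    ∃ u : (ZMod n)ˣ, (k : ZMod n) = (u : ZMod n) * (Nat.gcd k n : ZMod n) := by
  haveI : NeZero n := ⟨hn.ne'⟩
  set e := Nat.gcd k n with he
  have hepos : 0 < e := Nat.gcd_pos_of_pos_right k hn
  have hed : e ∣ n := Nat.gcd_dvd_right k n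
  have hm : (n / e) ∣ n := Nat.div_dvd_of_dvd hed
  have hcop : Nat.Coprime (k / e) (n / e) := Nat.coprime_div_gcd_div_gcd hepos
  obtain ⟨u, hu⟩ := ZMod.unitsMap_surjective hm (ZMod.unitOfCoprime _ hcop)
  refine ⟨u, ?_⟩
  have h1 : (ZMod.castHom hm (ZMod (n/e))) (u : ZMod n) = ((k / e : ℕ) : ZMod (n/e)) := by
    have h := congrArg (Units.val) hu
    rw [ZMod.unitsMap_def] at h
    simpa [ZMod.coe_unitOfCoprime] using h
  have h2 : (((((u : ZMod n) - ((k/e : ℕ) : ZMod n))).val : ℕ) : ZMod (n/e)) = 0 := by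
    have hc : (ZMod.castHom hm (ZMod (n/e))) ((u : ZMod n) - ((k/e : ℕ) : ZMod n)) = 0 := by
      rw [map_sub, h1, map_natCast, sub_self]
    rw [ZMod.natCast_val]
    rwa [ZMod.castHom_apply] at hc
  obtain ⟨t, ht⟩ : (n/e) ∣ ((u : ZMod n) - ((k/e : ℕ) : ZMod n)).val :=
    (ZMod.natCast_eq_zero_iff _ _).mp h2
  have h3 : (e : ZMod n) * ((u : ZMod n) - ((k/e : ℕ) : ZMod n)) = 0 := by
    have hh : (e : ZMod n) * ((u : ZMod n) - ((k/e : ℕ) : ZMod n))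
        = ((e * ((u : ZMod n) - ((k/e : ℕ) : ZMod n)).val : ℕ) : ZMod n) := by
      push_cast [ZMod.natCast_val, ZMod.cast_id]
      ring
    rw [hh, ht, ← mul_assoc, Nat.mul_div_cancel' hed]
    push_cast
    simp
  have h4 : (k : ZMod n) = ((e * (k/e) : ℕ) : ZMod n) := by
    rw [Nat.mul_div_cancel' (Nat.gcd_dvd_left k n)]
  rw [h4]
  push_cast
  linear_combination -h3

lemma lam_gcd {n : ℕ} (hn : 0 < n) (D : Finset ℕ) (k : ℕ) :
    lam n (connSet n D) k = lam n (connSet n D) (Nat.gcd k n) := by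
  haveI : NeZero n := ⟨hn.ne'⟩
  obtain ⟨u, hu⟩ := exists_unit_gcd hn k
  rw [lam_eq_sum_T hn, lam_eq_sum_T hn, ← TSet_unit_sum hn D u (fun y => fz n ((Nat.gcd k n : ZMod n) * y))]
  refine Finset.sum_congr rfl fun x _ => ?_
  rw [hu]
  ring_nf

lemma card_gcd_fiber {n : ℕ} (hn : 0 < n) {e : ℕ} (he : e ∣ n) :
    ((Finset.Icc 1 n).filter (fun k => Nat.gcd k n = e)).card = Nat.totient (n / e) := by
  rw [Nat.totient_div_of_dvd he]
  refine Finset.card_nbij' (i := fun k => k % n) (j := fun k => if k = 0 then n else k)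
    ?_ ?_ ?_ ?_
  · intro k hk
    simp only [Finset.mem_coe, Finset.mem_filter, Finset.mem_Icc] at hk
    simp only [Finset.mem_coe, Finset.mem_filter, Finset.mem_range]
    refine ⟨Nat.mod_lt _ hn, ?_⟩
    rw [Nat.gcd_comm, gcd_mod, hk.2]
  · intro k hk
    simp only [Finset.mem_coe, Finset.mem_filter, Finset.mem_range] at hk
    simp only [Finset.mem_coe, Finset.mem_filter, Finset.mem_Icc]
    by_cases h0 : k = 0
    · subst h0
      simp only [if_pos rfl, ite_true]
      refine ⟨⟨hn, le_refl n⟩, ?_⟩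
      rw [Nat.gcd_self]
      simpa using hk.2
    · rw [if_neg h0]
      exact ⟨⟨Nat.pos_of_ne_zero h0, hk.1.le⟩, by rw [Nat.gcd_comm]; exact hk.2⟩
  · intro k hk
    simp only [Finset.mem_coe, Finset.mem_filter, Finset.mem_Icc] at hk
    dsimp only
    by_cases h0 : k % n = 0
    · rw [if_pos h0]
      obtain ⟨c, rfl⟩ : n ∣ k := Nat.dvd_of_mod_eq_zero h0
      have h1 : c ≤ 1 := Nat.le_of_mul_le_mul_left (by simpa using hk.1.2) hn
      have h2 : c ≠ 0 := by rintro rfl; simp at hk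
      have hc : c = 1 := by omega
      simp [hc]
    · rw [if_neg h0]
      have : k < n := by
        rcases Nat.lt_or_ge k n with h | h
        · exact h
        · exfalso; apply h0; have : k = n := by omega
          simp [this]
      exact Nat.mod_eq_of_lt this
  · intro k hk
    simp only [Finset.mem_coe, Finset.mem_filter, Finset.mem_range] at hk
    dsimp only
    by_cases h0 : k = 0
    · rw [if_pos h0, h0, Nat.mod_self]
    · rw [if_neg h0]
      exact Nat.mod_eq_of_lt hk.1

lemma connSet_card {n : ℕ} (hn : 0 < n) (D : Finset ℕ) (hD : D ⊆ n.divisors) :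
    (connSet n D).card = ∑ d ∈ D, Nat.totient (n / d) := by
  have hcf := Finset.card_eq_sum_card_fiberwise (s := connSet n D) (t := D)
    (f := fun g => Nat.gcd g n) (fun g hg => (Finset.mem_filter.mp hg).2)
  rw [hcf]
  refine Finset.sum_congr rfl fun d hd => ?_
  rw [← card_gcd_fiber hn (Nat.dvd_of_mem_divisors (hD hd))]
  congr 1
  ext k
  simp only [connSet, Finset.mem_filter, Finset.mem_Icc]
  constructor
  · rintro ⟨⟨h1, _⟩, h2⟩; exact ⟨h1, h2⟩
  · rintro ⟨h1, h2⟩; exact ⟨⟨h1, h2 ▸ hd⟩, h2⟩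

lemma count_spec {n : ℕ} (hn : 0 < n) (D : Finset ℕ) (v : ℂ) :
    Multiset.count v (spec n (connSet n D))
      = ∑ e ∈ n.divisors.filter (fun e => v = lam n (connSet n D) e), Nat.totient (n / e) := by
  classical
  have h1 : Multiset.count v (spec n (connSet n D))
      = ((Finset.Icc 1 n).filter (fun k => v = lam n (connSet n D) k)).card := by
    rw [spec, Multiset.count_map, Finset.card, Finset.filter_val]
  rw [h1]
  have h2 : (Finset.Icc 1 n).filter (fun k => v = lam n (connSet n D) k)
      = (Finset.Icc 1 n).filter (fun k => v = lam n (connSet n D) (Nat.gcd k n)) := by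
    refine Finset.filter_congr fun k _ => ?_
    rw [← lam_gcd hn]
  rw [h2]
  set A := (Finset.Icc 1 n).filter (fun k => v = lam n (connSet n D) (Nat.gcd k n)) with hA
  have hcf := Finset.card_eq_sum_card_fiberwise (s := A)
    (t := n.divisors.filter (fun e => v = lam n (connSet n D) e))
    (f := fun k => Nat.gcd k n) ?_
  · rw [hcf]
    refine Finset.sum_congr rfl fun e hiv => ?_
    simp only [Finset.mem_filter] at hiv
    rw [← card_gcd_fiber hn (Nat.dvd_of_mem_divisors hiv.1)]
    congr 1
    ext k
    simp only [hA, Finset.mem_filter, Finset.mem_Icc]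
    constructor
    · rintro ⟨⟨h3, _⟩, h4⟩; exact ⟨h3, h4⟩
    · rintro ⟨h3, h4⟩; exact ⟨⟨h3, h4 ▸ hiv.2⟩, h4⟩
  · intro k hk
    simp only [hA, Finset.mem_coe, Finset.mem_filter, Finset.mem_Icc] at hk
    simp only [Finset.mem_coe, Finset.mem_filter, Nat.mem_divisors]
    exact ⟨⟨Nat.gcd_dvd_right k n, hn.ne'⟩, hk.2⟩

lemma lam_top {n : ℕ} (hn : 0 < n) (S : Finset ℕ) :
    lam n S n = (S.card : ℂ) := by
  rw [lam]
  have h1 : (omegaN n) ^ n = 1 := (omega_prim hn).pow_eq_one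
  have : ∀ g ∈ S, omegaN n ^ (n * g) = 1 := by
    intro g _
    rw [pow_mul, h1, one_pow]
  rw [Finset.sum_congr rfl this]
  simp

lemma omega_half {n : ℕ} (hn : 0 < n) (h2 : 2 ∣ n) : omegaN n ^ (n / 2) = -1 := by
  rw [omegaN, ← Complex.exp_nat_mul]
  have hne : (n : ℂ) ≠ 0 := Nat.cast_ne_zero.mpr hn.ne'
  have hhalf : ((n / 2 : ℕ) : ℂ) * 2 = (n : ℂ) := by
    exact_mod_cast congrArg (Nat.cast : ℕ → ℂ) (Nat.div_mul_cancel h2)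
  have : ((n / 2 : ℕ) : ℂ) * (2 * Real.pi * Complex.I / n) = Real.pi * Complex.I := by
    have hre : ((n / 2 : ℕ) : ℂ) * (2 * Real.pi * Complex.I / n)
        = (((n / 2 : ℕ) : ℂ) * 2) * (Real.pi * Complex.I) / n := by ring
    rw [hre, hhalf]
    field_simp
  rw [this, Complex.exp_pi_mul_I]

lemma lam_half {n : ℕ} (hn : 0 < n) (h2 : 2 ∣ n) (D : Finset ℕ) (hD : D ⊆ n.divisors) :
    lam n (connSet n D) (n / 2)
      = ((∑ d ∈ D.filter (fun d => Even d), Nat.totient (n / d) : ℕ) : ℂ)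
        - ((∑ d ∈ D.filter (fun d => Odd d), Nat.totient (n / d) : ℕ) : ℂ) := by
  classical
  have hsplit : lam n (connSet n D) (n / 2)
      = ∑ g ∈ connSet n D, (if Even g then (1 : ℂ) else -1) := by
    rw [lam]
    refine Finset.sum_congr rfl fun g _ => ?_
    rw [pow_mul, omega_half hn h2]
    rcases Nat.even_or_odd g with h | h
    · rw [if_pos h, h.neg_one_pow]
    · rw [if_neg (Nat.not_even_iff_odd.mpr h), h.neg_one_pow]
  rw [hsplit, Finset.sum_ite]
  simp only [Finset.sum_const, nsmul_eq_mul, mul_one, mul_neg]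
  have even_gcd : ∀ g : ℕ, Even (Nat.gcd g n) ↔ Even g := by
    intro g
    have hiff : (2 ∣ Nat.gcd g n) ↔ (2 ∣ g) :=
      ⟨fun h => h.trans (Nat.gcd_dvd_left g n), fun h => Nat.dvd_gcd h h2⟩
    simpa [even_iff_two_dvd] using hiff
  have hev : (connSet n D).filter (fun g => Even g)
      = connSet n (D.filter (fun d => Even d)) := by
    ext g
    simp only [connSet, Finset.mem_filter, Finset.mem_Icc]
    constructor
    · rintro ⟨⟨h1, hDg⟩, he⟩; exact ⟨h1, hDg, (even_gcd g).mpr he⟩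
    · rintro ⟨h1, hDg, he⟩; exact ⟨⟨h1, hDg⟩, (even_gcd g).mp he⟩
  have hodd : (connSet n D).filter (fun g => ¬ Even g)
      = connSet n (D.filter (fun d => Odd d)) := by
    ext g
    simp only [connSet, Finset.mem_filter, Finset.mem_Icc, ← Nat.not_even_iff_odd]
    constructor
    · rintro ⟨⟨h1, hDg⟩, he⟩; exact ⟨h1, hDg, fun hc => he ((even_gcd g).mp hc)⟩
    · rintro ⟨h1, hDg, he⟩; exact ⟨⟨h1, hDg⟩, fun hc => he ((even_gcd g).mpr hc)⟩
  rw [hev, hodd, connSet_card hn _ ((Finset.filter_subset _ _).trans hD),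
    connSet_card hn _ ((Finset.filter_subset _ _).trans hD)]
  ring

lemma count_spec_parity {n : ℕ} (hn : 0 < n) (h2 : 2 ∣ n) (D : Finset ℕ) (v : ℂ) :
    ((Multiset.count v (spec n (connSet n D)) : ℕ) : ZMod 2)
      = (if v = lam n (connSet n D) n then 1 else 0)
        + (if v = lam n (connSet n D) (n / 2) then 1 else 0) := by
  classical
  rw [count_spec hn D v]
  have hhalf_lt : n / 2 < n := Nat.div_lt_self hn one_lt_two
  have hterm : ∀ e ∈ n.divisors.filter (fun e => v = lam n (connSet n D) e),
      ((Nat.totient (n / e) : ℕ) : ZMod 2)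
        = (if e = n then 1 else 0) + (if e = n / 2 then 1 else 0) := by
    intro e he
    simp only [Finset.mem_filter, Nat.mem_divisors] at he
    obtain ⟨⟨hed, _⟩, _⟩ := he
    have hmul : e * (n / e) = n := Nat.mul_div_cancel' hed
    have hepos : 0 < e := Nat.pos_of_mem_divisors (Nat.mem_divisors.mpr ⟨hed, hn.ne'⟩)
    by_cases h1 : e = n
    · subst h1
      rw [Nat.div_self hn, Nat.totient_one, if_pos rfl, if_neg (by omega)]
      rfl
    · by_cases hq : e = n / 2
      · subst hq
        have h2' : n / 2 * 2 = n := Nat.div_mul_cancel h2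
        have hpos2 : 0 < n / 2 := by omega
        have : n / (n / 2) = 2 := by
          have hmd := Nat.mul_div_cancel_left 2 hpos2
          rwa [h2'] at hmd
        rw [this, if_neg h1, if_pos rfl, Nat.totient_two]
        rfl
      · have h2' : n / 2 * 2 = n := Nat.div_mul_cancel h2
        have h3 : 3 ≤ n / e := by
          have hne1 : n / e ≠ 1 := fun hc => h1 (by rw [hc, mul_one] at hmul; exact hmul)
          have hne2 : n / e ≠ 2 := fun hc => hq (by rw [hc] at hmul; omega)
          have : 0 < n / e := Nat.div_pos (Nat.le_of_dvd hn hed) hepos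
          omega
        rw [if_neg h1, if_neg hq, add_zero]
        rw [ZMod.natCast_eq_zero_iff]
        exact (Nat.totient_even (by omega)).two_dvd
  push_cast
  rw [Finset.sum_congr rfl hterm, Finset.sum_add_distrib,
    Finset.sum_ite_eq' _ n (fun _ => (1 : ZMod 2)),
    Finset.sum_ite_eq' _ (n / 2) (fun _ => (1 : ZMod 2))]
  have hmemn : n ∈ n.divisors := Nat.mem_divisors_self n hn.ne'
  have hmemh : n / 2 ∈ n.divisors := Nat.mem_divisors.mpr ⟨Nat.div_dvd_of_dvd h2, hn.ne'⟩
  by_cases ha : v = lam n (connSet n D) n <;> by_cases hb : v = lam n (connSet n D) (n / 2) <;>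
    simp [ha, hb, hmemn, hmemh]

lemma sum_Icc_shift (G : ℕ → ℂ) (m : ℕ) :
    ∑ k ∈ Finset.Icc 1 m, G k = ∑ k ∈ Finset.range m, G (k + 1) := by
  induction m with
  | zero => simp
  | succ p ih => rw [Finset.sum_Icc_succ_top (by omega : 1 ≤ p + 1), Finset.sum_range_succ, ih]

lemma sum_Icc_castZMod {n : ℕ} (hn : 0 < n) (F : ZMod n → ℂ) :
    ∑ k ∈ Finset.Icc 1 n, F (k : ZMod n) = ∑ k ∈ Finset.range n, F (k : ZMod n) := by
  obtain ⟨m, rfl⟩ : ∃ m, n = m + 1 := ⟨n - 1, by omega⟩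
  rw [Finset.sum_Icc_succ_top (by omega : 1 ≤ m + 1), Finset.sum_range_succ']
  congr 1
  · exact sum_Icc_shift (fun k => F (k : ZMod (m + 1))) m
  · rw [Nat.cast_add, Nat.cast_one, Nat.cast_zero]
    congr 1
    exact_mod_cast (ZMod.natCast_self (m + 1))

lemma second_moment {n : ℕ} (hn : 0 < n) (D : Finset ℕ) :
    ∑ k ∈ Finset.Icc 1 n, (lam n (connSet n D) k * (starRingEnd ℂ) (lam n (connSet n D) k))
      = (n : ℂ) * ((connSet n D).card : ℂ) := by
  classical
  haveI : NeZero n := ⟨hn.ne'⟩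
  have hterm : ∀ k : ℕ, lam n (connSet n D) k * (starRingEnd ℂ) (lam n (connSet n D) k)
      = ∑ x ∈ TSet n D, ∑ y ∈ TSet n D, fz n ((k : ZMod n) * (x - y)) := by
    intro k
    rw [lam_eq_sum_T hn, map_sum, Finset.sum_mul_sum]
    refine Finset.sum_congr rfl fun x _ => Finset.sum_congr rfl fun y _ => ?_
    rw [fz_conj, ← fz_neg hn, ← fz_add hn]
    congr 1
    ring
  calc ∑ k ∈ Finset.Icc 1 n, (lam n (connSet n D) k * (starRingEnd ℂ) (lam n (connSet n D) k))
      = ∑ x ∈ TSet n D, ∑ y ∈ TSet n D, ∑ k ∈ Finset.Icc 1 n, fz n ((k : ZMod n) * (x - y)) := by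
        rw [Finset.sum_congr rfl fun k _ => hterm k]
        rw [Finset.sum_comm]
        refine Finset.sum_congr rfl fun x _ => Finset.sum_comm
    _ = ∑ x ∈ TSet n D, ∑ y ∈ TSet n D, (if x = y then (n : ℂ) else 0) := by
        refine Finset.sum_congr rfl fun x _ => Finset.sum_congr rfl fun y _ => ?_
        by_cases hxy : x = y
        · subst hxy
          simp [fz_zero]
        · rw [if_neg hxy]
          have hz : x - y ≠ 0 := fun hc => hxy (by linear_combination (norm := ring_nf) hc)
          have hfz1 : fz n (x - y) ≠ 1 := by
            intro hc
            exact hz (fz_inj hn (by rw [hc, fz_zero]))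
          have : ∑ k ∈ Finset.Icc 1 n, fz n ((k : ZMod n) * (x - y))
              = ∑ k ∈ Finset.range n, fz n (x - y) ^ k := by
            rw [sum_Icc_castZMod hn (fun w => fz n (w * (x - y)))]
            exact Finset.sum_congr rfl fun k _ => fz_nat_mul hn k _
          rw [this, geom_sum_eq hfz1]
          have hpow : fz n (x - y) ^ n = 1 := by
            rw [← fz_nat_mul hn n (x - y), ZMod.natCast_self, zero_mul, fz_zero]
          rw [hpow, sub_self, zero_div]
    _ = (n : ℂ) * ((connSet n D).card : ℂ) := by
        rw [Finset.sum_congr rfl fun x hx => Finset.sum_ite_eq (TSet n D) x (fun _ => (n : ℂ))]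
        rw [Finset.sum_congr rfl fun x hx => if_pos hx]
        rw [Finset.sum_const, TSet_card hn, nsmul_eq_mul]
        ring

/-- For even `n`, isospectral integral circulant graphs have equal odd-divisor and
even-divisor totient sums. -/
theorem totient_sums_eq_of_isospectral
    (n : ℕ) (hn : 0 < n) (h2 : 2 ∣ n)
    (D₁ D₂ : Finset ℕ)
    (hD₁ : D₁ ⊆ n.divisors) (hD₂ : D₂ ⊆ n.divisors)
    (hspec : spec n (connSet n D₁) = spec n (connSet n D₂)) :
    (∑ d ∈ D₁.filter (fun d => Odd d), Nat.totient (n / d)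
        = ∑ d ∈ D₂.filter (fun d => Odd d), Nat.totient (n / d)) ∧
    (∑ d ∈ D₁.filter (fun d => Even d), Nat.totient (n / d)
        = ∑ d ∈ D₂.filter (fun d => Even d), Nat.totient (n / d)) := by
  classical
  set O₁ := ∑ d ∈ D₁.filter (fun d => Odd d), Nat.totient (n / d) with hO₁
  set O₂ := ∑ d ∈ D₂.filter (fun d => Odd d), Nat.totient (n / d) with hO₂
  set E₁ := ∑ d ∈ D₁.filter (fun d => Even d), Nat.totient (n / d) with hE₁
  set E₂ := ∑ d ∈ D₂.filter (fun d => Even d), Nat.totient (n / d) with hE₂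
  -- card split
  have hsplit : ∀ (D : Finset ℕ), D ⊆ n.divisors → (connSet n D).card
      = (∑ d ∈ D.filter (fun d => Even d), Nat.totient (n / d))
        + (∑ d ∈ D.filter (fun d => Odd d), Nat.totient (n / d)) := by
    intro D hD
    rw [connSet_card hn D hD,
      ← Finset.sum_filter_add_sum_filter_not D (fun d => Even d) (fun d => Nat.totient (n / d))]
    congr 1
    refine Finset.sum_congr (Finset.filter_congr fun d _ => ?_) fun _ _ => rfl
    exact Nat.not_even_iff_odd
  -- second moment: equal cards
  have hmom := congrArg (fun M : Multiset ℂ => (M.map (fun z => z * (starRingEnd ℂ) z)).sum) hspec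
  simp only [spec, Multiset.map_map, Function.comp] at hmom
  have hmom' : ∑ k ∈ Finset.Icc 1 n, (lam n (connSet n D₁) k * (starRingEnd ℂ) (lam n (connSet n D₁) k))
      = ∑ k ∈ Finset.Icc 1 n, (lam n (connSet n D₂) k * (starRingEnd ℂ) (lam n (connSet n D₂) k)) := hmom
  rw [second_moment hn D₁, second_moment hn D₂] at hmom'
  have hcard : (connSet n D₁).card = (connSet n D₂).card := by
    have := mul_left_cancel₀ (Nat.cast_ne_zero.mpr hn.ne' : (n : ℂ) ≠ 0) hmom'
    exact_mod_cast this
  have hEO : E₁ + O₁ = E₂ + O₂ := by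
    rw [← hsplit D₁ hD₁, ← hsplit D₂ hD₂]; exact hcard
  -- count parity: equal alternating sums
  set v := lam n (connSet n D₁) (n / 2) with hv
  have hcount : Multiset.count v (spec n (connSet n D₁))
      = Multiset.count v (spec n (connSet n D₂)) := by rw [hspec]
  have hz := congrArg (fun c : ℕ => (c : ZMod 2)) hcount
  rw [count_spec_parity hn h2 D₁ v, count_spec_parity hn h2 D₂ v] at hz
  have htop : lam n (connSet n D₂) n = lam n (connSet n D₁) n := by
    rw [lam_top hn, lam_top hn, hcard]
  rw [htop, if_pos hv] at hz
  have hz2 : (1 : ZMod 2) = (if v = lam n (connSet n D₂) (n / 2) then 1 else 0) :=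
    add_left_cancel hz
  have hv2 : v = lam n (connSet n D₂) (n / 2) := by
    by_contra hc
    rw [if_neg hc] at hz2
    exact one_ne_zero hz2
  rw [hv, lam_half hn h2 D₁ hD₁, lam_half hn h2 D₂ hD₂] at hv2
  rw [← hO₁, ← hO₂, ← hE₁, ← hE₂] at hv2
  have hEOc : ((E₁ : ℂ) + O₁) = ((E₂ : ℂ) + O₂) := by exact_mod_cast hEO
  have hE : (E₁ : ℂ) = (E₂ : ℂ) := by linear_combination (hEOc + hv2) / 2
  have hO : (O₁ : ℂ) = (O₂ : ℂ) := by linear_combination (hEOc - hv2) / 2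
  exact ⟨Nat.cast_inj.mp hO, Nat.cast_inj.mp hE⟩
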